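/- Let n, k ≥ 1 and identify ℂⁿ × ℝᵏ with ℝ^{2n+k}. Let Γ ⊂ ℂⁿ × ℝᵏ be a lattice (the ℤ-span of an ℝ-basis of ℝ^{2n+k}). Then there exists a real-linear automorphism M of ℂⁿ × ℝᵏ of the form M(z, t) = (A z + B t, C t), with A a unitary n × n complex matrix, B a complex n × k matrix, and C ∈ GL(k, ℝ), such that the lattice M(Γ) admits a ℤ-basis whose last k elements are (0, e₁), …, (0, e_k), where e₁, …, e_k is the standard basis of ℝᵏ. -/

import Mathlib

/-- **Existence of adapted period matrices.**
Every lattice `Γ ⊂ ℂⁿ × ℝᵏ` can be carried, by an automorphism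
`M(z, t) = (A z + B t, C t)` with `A` unitary, `B ∈ M_{n,k}(ℂ)` and
`C ∈ GL(k, ℝ)`, onto a lattice admitting a `ℤ`-basis whose last `k` elements
are `(0, e₁), …, (0, e_k)`. -/
theorem stmt_4 (n k : ℕ) (hn : 1 ≤ n) (hk : 1 ≤ k)
    (Γ : AddSubgroup ((Fin n → ℂ) × (Fin k → ℝ)))
    (hΓ : ∃ b : Module.Basis (Fin (2 * n + k)) ℝ ((Fin n → ℂ) × (Fin k → ℝ)),
      Γ = AddSubgroup.closure (Set.range b)) :
    ∃ (A : Matrix (Fin n) (Fin n) ℂ) (B : Matrix (Fin n) (Fin k) ℂ)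
      (C : Matrix (Fin k) (Fin k) ℝ)
      (M : ((Fin n → ℂ) × (Fin k → ℝ)) ≃ₗ[ℝ] ((Fin n → ℂ) × (Fin k → ℝ))),
      A ∈ Matrix.unitaryGroup (Fin n) ℂ ∧
      IsUnit C.det ∧
      (∀ (z : Fin n → ℂ) (t : Fin k → ℝ),
        M (z, t) = (A.mulVec z + B.mulVec (fun i => (t i : ℂ)), C.mulVec t)) ∧
      ∃ v : Fin (2 * n + k) → ((Fin n → ℂ) × (Fin k → ℝ)),
        LinearIndependent ℤ v ∧
        AddSubgroup.closure (Set.range v) =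
          Γ.map (M : ((Fin n → ℂ) × (Fin k → ℝ)) →ₗ[ℝ] ((Fin n → ℂ) × (Fin k → ℝ))).toAddMonoidHom ∧
        ∀ i : Fin k, v (Fin.natAdd (2 * n) i) = (0, Pi.single i 1) := by
  classical
  obtain ⟨b, rfl⟩ := hΓ
  -- the second-coordinate projections of the lattice basis span ℝᵏ
  have hspan : Submodule.span ℝ (Set.range fun i => (b i).2) = ⊤ := by
    have h1 : (Set.range fun i => (b i).2)
        = (LinearMap.snd ℝ (Fin n → ℂ) (Fin k → ℝ)) '' Set.range b := by
      rw [← Set.range_comp]; rfl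
    rw [h1, ← Submodule.map_span, b.span_eq, Submodule.map_top, LinearMap.range_eq_top]
    exact fun t => ⟨(0, t), rfl⟩
  obtain ⟨s, hs_sub, hs_span, hs_li⟩ :=
    exists_linearIndependent ℝ (Set.range fun i => (b i).2)
  rw [hspan] at hs_span
  have hsfin : s.Finite := (Set.finite_range _).subset hs_sub
  haveI := hsfin.fintype
  let β : Module.Basis s ℝ (Fin k → ℝ) := Module.Basis.mk hs_li (by rw [Subtype.range_coe, hs_span])
  have hcard : Fintype.card s = k := by
    have h1 := Module.finrank_eq_card_basis β
    rw [Module.finrank_fin_fun] at h1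
    exact h1.symm
  let e : Fin k ≃ s := (Fintype.equivFinOfCardEq hcard).symm
  choose gf hgf using fun x : s => hs_sub x.2
  let g : Fin k → Fin (2 * n + k) := fun j => gf (e j)
  let τ : Fin k → (Fin k → ℝ) := fun j => (b (g j)).2
  have hτ : ∀ j, τ j = (e j : Fin k → ℝ) := fun j => hgf (e j)
  have hτli : LinearIndependent ℝ τ := by
    have h1 : τ = (fun x : s => (x : Fin k → ℝ)) ∘ e := funext hτ
    rw [h1]; exact hs_li.comp e e.injective
  have hginj : Function.Injective g := by
    intro a c h
    have h2 : τ a = τ c := congrArg (fun i => (b i).2) h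
    rw [hτ, hτ] at h2
    exact e.injective (Subtype.coe_injective h2)
  haveI : Nonempty (Fin k) := ⟨⟨0, hk⟩⟩
  let τb : Module.Basis (Fin k) ℝ (Fin k → ℝ) :=
    basisOfLinearIndependentOfCardEqFinrank hτli (by simp [Module.finrank_fin_fun])
  let T : Matrix (Fin k) (Fin k) ℝ := Matrix.of fun i j => τ j i
  have hT : T = (Pi.basisFun ℝ (Fin k)).toMatrix τb := by
    ext i j
    simp [T, Module.Basis.toMatrix_apply, τb, coe_basisOfLinearIndependentOfCardEqFinrank]
  haveI : Invertible T := by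
    rw [hT]; exact (Pi.basisFun ℝ (Fin k)).invertibleToMatrix τb
  let C : Matrix (Fin k) (Fin k) ℝ := ⅟T
  haveI hCinv : Invertible C := invertibleInvOf
  have hTcol : ∀ j, T.mulVec (Pi.single j 1) = τ j := by
    intro j; funext i; simp [T]
  have hCτ : ∀ j, C.mulVec (τ j) = Pi.single j 1 := by
    intro j
    rw [← hTcol j, Matrix.mulVec_mulVec]
    show (⅟T * T).mulVec _ = _
    rw [invOf_mul_self, Matrix.one_mulVec]
  let ζ : Fin k → (Fin n → ℂ) := fun j => (b (g j)).1
  let Zm : Matrix (Fin n) (Fin k) ℂ := Matrix.of fun i j => ζ j i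
  let Cc : Matrix (Fin k) (Fin k) ℂ := C.map (algebraMap ℝ ℂ)
  let Tc : Matrix (Fin k) (Fin k) ℂ := T.map (algebraMap ℝ ℂ)
  let B : Matrix (Fin n) (Fin k) ℂ := -(Zm * Cc)
  have hCT : Cc * Tc = 1 := by
    rw [show Cc * Tc = ((C * T).map (algebraMap ℝ ℂ)) from (Matrix.map_mul).symm]
    show ((⅟T * T).map (algebraMap ℝ ℂ)) = 1
    rw [invOf_mul_self, Matrix.map_one _ (map_zero _) (map_one _)]
  have hτc : ∀ j, (fun i => ((τ j i : ℝ) : ℂ)) = Tc.mulVec (Pi.single j 1) := by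
    intro j; funext i; simp [Tc, T]
  have hBτ : ∀ j, B.mulVec (fun i => ((τ j i : ℝ) : ℂ)) = -(ζ j) := by
    intro j
    have h2 : (Zm * Cc).mulVec (Tc.mulVec (Pi.single j 1)) = ζ j := by
      rw [Matrix.mulVec_mulVec, Matrix.mul_assoc, hCT, Matrix.mul_one]
      funext i; simp [Zm]
    show (-(Zm * Cc)).mulVec _ = _
    rw [hτc j, Matrix.neg_mulVec, h2]
  -- the linear automorphism
  let ι : (Fin k → ℝ) →ₗ[ℝ] (Fin k → ℂ) :=
    LinearMap.pi fun i => (Algebra.linearMap ℝ ℂ).comp (LinearMap.proj i)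
  let L : (Fin k → ℝ) →ₗ[ℝ] (Fin n → ℂ) := (B.mulVecLin.restrictScalars ℝ).comp ι
  have hL : ∀ t, L t = B.mulVec (fun i => (t i : ℂ)) := fun t => rfl
  let F : ((Fin n → ℂ) × (Fin k → ℝ)) →ₗ[ℝ] ((Fin n → ℂ) × (Fin k → ℝ)) :=
    LinearMap.prod (LinearMap.fst ℝ _ _ + L.comp (LinearMap.snd ℝ _ _))
      ((C.mulVecLin).comp (LinearMap.snd ℝ _ _))
  let G : ((Fin n → ℂ) × (Fin k → ℝ)) →ₗ[ℝ] ((Fin n → ℂ) × (Fin k → ℝ)) :=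
    LinearMap.prod (LinearMap.fst ℝ _ _ - L.comp ((⅟C).mulVecLin.comp (LinearMap.snd ℝ _ _)))
      ((⅟C).mulVecLin.comp (LinearMap.snd ℝ _ _))
  have hCiC : ∀ t, C.mulVec ((⅟C).mulVec t) = t := by
    intro t; rw [Matrix.mulVec_mulVec, mul_invOf_self, Matrix.one_mulVec]
  have hiCC : ∀ t, (⅟C).mulVec (C.mulVec t) = t := by
    intro t; rw [Matrix.mulVec_mulVec, invOf_mul_self, Matrix.one_mulVec]
  have hFG : F.comp G = LinearMap.id := by
    apply LinearMap.ext; rintro ⟨z, t⟩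
    simp [F, G, hCiC, Matrix.mulVecLin_apply, sub_add_cancel]
  have hGF : G.comp F = LinearMap.id := by
    apply LinearMap.ext; rintro ⟨z, t⟩
    simp [F, G, hiCC, Matrix.mulVecLin_apply, add_sub_cancel_right]
  let M : ((Fin n → ℂ) × (Fin k → ℝ)) ≃ₗ[ℝ] ((Fin n → ℂ) × (Fin k → ℝ)) :=
    LinearEquiv.ofLinear F G hFG hGF
  have hMapp : ∀ z t, M (z, t) = (z + L t, C.mulVec t) := fun z t => rfl
  -- the permutation
  have hembinj : Function.Injective (Fin.natAdd (2 * n) : Fin k → Fin (2 * n + k)) := by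
    intro a c h
    have h2 := congrArg Fin.val h
    simp only [Fin.coe_natAdd, add_right_inj] at h2
    exact Fin.ext h2
  let eqv : {x // x ∈ Set.range (Fin.natAdd (2 * n) : Fin k → Fin (2 * n + k))} ≃
      {x // x ∈ Set.range g} :=
    (Equiv.ofInjective _ hembinj).symm.trans (Equiv.ofInjective g hginj)
  let σ : Equiv.Perm (Fin (2 * n + k)) := eqv.extendSubtype
  have hσ : ∀ j, σ (Fin.natAdd (2 * n) j) = g j := by
    intro j
    rw [show σ (Fin.natAdd (2 * n) j)
      = (eqv ⟨Fin.natAdd (2 * n) j, ⟨j, rfl⟩⟩ : Fin (2 * n + k)) from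
        Equiv.extendSubtype_apply_of_mem eqv _ ⟨j, rfl⟩]
    simp [eqv, Equiv.ofInjective_symm_apply]
  let v : Fin (2 * n + k) → ((Fin n → ℂ) × (Fin k → ℝ)) := fun i => M (b (σ i))
  have hliR : LinearIndependent ℝ v :=
    (b.linearIndependent.comp σ σ.injective).map' M.toLinearMap M.ker
  have hliZ : LinearIndependent ℤ v := by
    apply hliR.restrict_scalars
    intro a c h
    have h2 : ((a : ℝ)) = (c : ℝ) := by simpa using h
    exact_mod_cast h2
  refine ⟨1, B, C, M, one_mem _, Matrix.isUnit_det_of_invertible C, ?_, v, hliZ, ?_, ?_⟩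
  · intro z t
    rw [hMapp, Matrix.one_mulVec, hL]
  · rw [AddMonoidHom.map_closure]
    congr 1
    have h1 : Set.range (⇑b ∘ ⇑σ) = Set.range b := σ.surjective.range_comp b
    calc Set.range v
        = ⇑(M : ((Fin n → ℂ) × (Fin k → ℝ)) →ₗ[ℝ] ((Fin n → ℂ) × (Fin k → ℝ))).toAddMonoidHom ''
          Set.range (⇑b ∘ ⇑σ) := Set.range_comp _ _
      _ = _ := by rw [h1]
  · intro j
    show M (b (σ (Fin.natAdd (2 * n) j))) = _
    rw [hσ j]
    have hb : b (g j) = (ζ j, τ j) := rfl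
    rw [hb, hMapp, hL, hBτ j, hCτ j]
    simp
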